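/- Let X be a real Banach space, let G be a compact topological group acting separately continuously on X by continuous linear operators via a homomorphism ρ, and let K ⊆ X be a nonempty closed convex balanced G-invariant set (balanced: λK ⊆ K for every real λ with |λ| ≤ 1). If z ∈ X \ K, then there exists a homogeneous G-invariant continuous polynomial P on X that separates z from K, i.e. sup_{w∈K}|P(w)| < |P(z)|. -/

import Mathlib

open MeasureTheory


/-- An `m`-homogeneous continuous polynomial: `P x = A (x, …, x)` for a single continuous
`m`-linear map `A`. -/
def IsHomogeneousPolynomial (𝕜 : Type*) [NontriviallyNormedField 𝕜] {X : Type*}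
    [NormedAddCommGroup X] [NormedSpace 𝕜 X] (m : ℕ) (P : X → 𝕜) : Prop :=
  ∃ A : ContinuousMultilinearMap 𝕜 (fun _ : Fin m => X) 𝕜, ∀ x, P x = A (fun _ => x)

set_option maxHeartbeats 2000000 in
/-- Let `X` be a real Banach space, `G` a compact topological group acting
separately continuously on `X` by invertible continuous linear operators via `ρ`, and
`K ⊆ X` a nonempty closed convex balanced `G`-invariant set. Then every `z ∉ K` can be
separated from `K` by a homogeneous `G`-invariant continuous polynomial. -/
theorem statement1 {X : Type*} [NormedAddCommGroup X] [NormedSpace ℝ X] [CompleteSpace X]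
    {G : Type*} [Group G] [TopologicalSpace G] [IsTopologicalGroup G] [CompactSpace G]
    (ρ : G →* (X ≃L[ℝ] X)) (hρ : ∀ x : X, Continuous fun g : G => (ρ g) x)
    (K : Set X) (hKne : K.Nonempty) (hKcl : IsClosed K) (hKcv : Convex ℝ K)
    (hKbal : Balanced ℝ K)
    (hK : ∀ (g : G), ∀ x ∈ K, (ρ g) x ∈ K)
    (z : X) (hz : z ∉ K) :
    ∃ (m : ℕ) (P : X → ℝ), IsHomogeneousPolynomial ℝ m P ∧
      (∀ (g : G) (x : X), P ((ρ g) x) = P x) ∧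
      ∃ c, c < ‖P z‖ ∧ ∀ w ∈ K, ‖P w‖ ≤ c := by
  classical
  borelize G
  haveI : LocallyCompactSpace G := inferInstance
  obtain ⟨f, u, hfK, hfz⟩ := geometric_hahn_banach_closed_point hKcv hKcl hz
  obtain ⟨w₀, hw₀⟩ := hKne
  have h0K : (0:X) ∈ K := by
    have := hKbal (0:ℝ) (by simp) (Set.smul_mem_smul_set hw₀)
    simpa using this
  have hu : 0 < u := by simpa using hfK 0 h0K
  have habs : ∀ v ∈ K, |f v| ≤ u := by
    intro v hv
    have h1 := hfK v hv
    have hvK : -v ∈ K := by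
      have := hKbal (-1:ℝ) (by norm_num) (Set.smul_mem_smul_set hv)
      simpa using this
    have h2 := hfK (-v) hvK
    rw [map_neg] at h2
    rw [abs_le]; constructor <;> linarith
  set μ : Measure G := Measure.haar with hμ
  -- uniform bound on operator norms
  obtain ⟨M, hM⟩ : ∃ M, ∀ g : G, ‖((ρ g⁻¹ : X ≃L[ℝ] X) : X →L[ℝ] X)‖ ≤ M := by
    apply banach_steinhaus
    intro x
    obtain ⟨C, hC⟩ := (isCompact_range ((hρ x).norm.comp continuous_inv)).bddAbove
    exact ⟨C, fun g => hC ⟨g, rfl⟩⟩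
  set M' : ℝ := max M 0 with hM'
  have hM'0 : 0 ≤ M' := le_max_right _ _
  have hcont : ∀ x : X, Continuous fun g : G => f ((ρ g⁻¹) x) :=
    fun x => f.continuous.comp ((hρ x).comp continuous_inv)
  have hint : ∀ (h : G → ℝ), Continuous h → Integrable h μ := fun h hh =>
    hh.integrable_of_hasCompactSupport ((isClosed_tsupport h).isCompact)
  -- choose exponent
  set u' : ℝ := (u + f z) / 2 with hu'
  have huu' : u < u' := by simp only [hu']; linarith
  have hu'z : u' < f z := by simp only [hu']; linarith
  have hu'0 : 0 < u' := hu.trans huu'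
  set U : Set G := {g | u' < f ((ρ g⁻¹) z)} with hU
  have hUopen : IsOpen U := isOpen_lt continuous_const (hcont z)
  have h1U : (1:G) ∈ U := by
    simp only [hU, Set.mem_setOf_eq, inv_one, map_one]
    exact hu'z
  have hUpos : 0 < μ U := hUopen.measure_pos μ ⟨1, h1U⟩
  have hUne : μ U ≠ ⊤ := (lt_of_le_of_lt (measure_mono (Set.subset_univ U)) (measure_lt_top μ _)).ne
  have hUtpos : 0 < (μ U).toReal := ENNReal.toReal_pos hUpos.ne' hUne
  have hratio : (1:ℝ) < (u'/u)^2 := by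
    have : 1 < u'/u := (one_lt_div hu).2 huu'
    nlinarith
  obtain ⟨m, hm⟩ := pow_unbounded_of_one_lt ((μ Set.univ).toReal / (μ U).toReal) hratio
  set n : ℕ := 2*m with hn
  have hne : Even n := ⟨m, by omega⟩
  have key : (μ Set.univ).toReal * u ^ n < (μ U).toReal * u' ^ n := by
    have h1 : ((u'/u)^2)^m = u'^n / u^n := by
      rw [← pow_mul, div_pow, ← hn]
    rw [h1] at hm
    have hun : 0 < u ^ n := pow_pos hu n
    rw [div_lt_div_iff₀ hUtpos hun] at hm
    calc (μ Set.univ).toReal * u ^ n < u' ^ n * (μ U).toReal := hm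
      _ = (μ U).toReal * u' ^ n := by ring
  -- the multilinear map
  set L : G → ContinuousMultilinearMap ℝ (fun _ : Fin n => X) ℝ := fun g =>
    (ContinuousMultilinearMap.mkPiAlgebra ℝ (Fin n) ℝ).compContinuousLinearMap
      (fun _ => f.comp ((ρ g⁻¹ : X ≃L[ℝ] X) : X →L[ℝ] X)) with hL
  have hLapply : ∀ (g : G) (y : Fin n → X), L g y = ∏ i, f ((ρ g⁻¹) (y i)) := by
    intro g y
    simp [hL]
  have hLcont : ∀ y : Fin n → X, Continuous fun g => L g y := by
    intro y
    simp only [hLapply]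
    exact continuous_finset_prod _ (fun i _ => hcont (y i))
  set A₀ : MultilinearMap ℝ (fun _ : Fin n => X) ℝ :=
    { toFun := fun y => ∫ g, L g y ∂μ
      map_update_add' := by
        intro dec y i a b
        have : ∀ g : G, L g (Function.update y i (a + b)) =
            L g (Function.update y i a) + L g (Function.update y i b) := fun g =>
          (L g).map_update_add y i a b
        simp_rw [this]
        exact integral_add (hint _ (hLcont _)) (hint _ (hLcont _))
      map_update_smul' := by
        intro dec y i c a
        have : ∀ g : G, L g (Function.update y i (c • a)) =
            c • L g (Function.update y i a) := fun g => (L g).map_update_smul y i c a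
        simp_rw [this]
        exact integral_smul c _ } with hA₀
  have hbound : ∀ y : Fin n → X, ‖A₀ y‖ ≤ ((μ Set.univ).toReal * (‖f‖ * M')^n) * ∏ i, ‖y i‖ := by
    intro y
    have hb : ∀ g : G, ‖L g y‖ ≤ (‖f‖ * M')^n * ∏ i, ‖y i‖ := by
      intro g
      rw [hLapply]
      calc ‖∏ i, f ((ρ g⁻¹) (y i))‖ ≤ ∏ i, ‖f ((ρ g⁻¹) (y i))‖ := by
            rw [Real.norm_eq_abs, Finset.abs_prod]
            exact Finset.prod_le_prod (fun i _ => abs_nonneg _) (fun i _ => le_of_eq (Real.norm_eq_abs _).symm)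
        _ ≤ ∏ i, (‖f‖ * M' * ‖y i‖) := by
            apply Finset.prod_le_prod (fun i _ => norm_nonneg _)
            intro i _
            calc ‖f ((ρ g⁻¹) (y i))‖ ≤ ‖f‖ * ‖(ρ g⁻¹) (y i)‖ := f.le_opNorm _
              _ ≤ ‖f‖ * (M' * ‖y i‖) := by
                  apply mul_le_mul_of_nonneg_left _ (norm_nonneg f)
                  calc ‖(ρ g⁻¹) (y i)‖ ≤ ‖((ρ g⁻¹ : X ≃L[ℝ] X) : X →L[ℝ] X)‖ * ‖y i‖ :=
                        ((ρ g⁻¹ : X ≃L[ℝ] X) : X →L[ℝ] X).le_opNorm (y i)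
                    _ ≤ M' * ‖y i‖ := by
                        apply mul_le_mul_of_nonneg_right _ (norm_nonneg _)
                        exact le_trans (hM g) (le_max_left _ _)
              _ = ‖f‖ * M' * ‖y i‖ := by ring
        _ = (‖f‖ * M')^n * ∏ i, ‖y i‖ := by
            rw [Finset.prod_mul_distrib, Finset.prod_const, Finset.card_fin]
    calc ‖A₀ y‖ ≤ ((‖f‖ * M')^n * ∏ i, ‖y i‖) * (μ Set.univ).toReal :=
          norm_integral_le_of_norm_le_const (Filter.Eventually.of_forall hb)
      _ = ((μ Set.univ).toReal * (‖f‖ * M')^n) * ∏ i, ‖y i‖ := by ring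
  set A : ContinuousMultilinearMap ℝ (fun _ : Fin n => X) ℝ :=
    A₀.mkContinuous _ hbound with hA
  set P : X → ℝ := fun x => ∫ g, (f ((ρ g⁻¹) x))^n ∂μ with hP
  have hPA : ∀ x, P x = A (fun _ => x) := by
    intro x
    have h1 : A (fun _ => x) = A₀ (fun _ => x) := rfl
    rw [h1]
    show P x = ∫ g, L g (fun _ => x) ∂μ
    simp only [hP, hLapply, Finset.prod_const, Finset.card_fin]
  refine ⟨n, P, ⟨A, hPA⟩, ?_, ?_⟩
  · -- invariance
    intro h x
    have : ∀ g : G, (ρ g⁻¹) ((ρ h) x) = (ρ (h⁻¹ * g)⁻¹) x := by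
      intro g
      rw [mul_inv_rev, inv_inv, map_mul]
      rfl
    simp only [hP, this]
    exact integral_mul_left_eq_self (fun g => (f ((ρ g⁻¹) x))^n) h⁻¹
  · refine ⟨(μ Set.univ).toReal * u ^ n, ?_, ?_⟩
    · -- lower bound at z
      have hPz : (μ U).toReal * u' ^ n ≤ P z := by
        have hind : ∀ g : G, U.indicator (fun _ => u' ^ n) g ≤ (f ((ρ g⁻¹) z))^n := by
          intro g
          by_cases hg : g ∈ U
          · rw [Set.indicator_of_mem hg]
            exact pow_le_pow_left₀ hu'0.le (le_of_lt hg) n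
          · rw [Set.indicator_of_notMem hg]
            exact hne.pow_nonneg _
        have h1 : ∫ g, U.indicator (fun _ => u' ^ n) g ∂μ ≤ P z := by
          apply integral_mono _ (hint _ (((hcont z).pow n))) hind
          exact (integrable_const _).indicator hUopen.measurableSet
        rw [integral_indicator_const _ hUopen.measurableSet] at h1
        simpa [mul_comm, Measure.real] using h1
      have : (μ Set.univ).toReal * u ^ n < P z := lt_of_lt_of_le key hPz
      exact lt_of_lt_of_le this (le_abs_self _)
    · -- upper bound on K
      intro w hw
      have hb : ∀ g : G, ‖(f ((ρ g⁻¹) w))^n‖ ≤ u ^ n := by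
        intro g
        rw [norm_pow, Real.norm_eq_abs]
        exact pow_le_pow_left₀ (abs_nonneg _) (habs _ (hK g⁻¹ w hw)) n
      calc ‖P w‖ ≤ u ^ n * (μ Set.univ).toReal :=
            norm_integral_le_of_norm_le_const (Filter.Eventually.of_forall hb)
        _ = (μ Set.univ).toReal * u ^ n := by ring
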